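/- (Bondy–Chvátal closure theorem for Hamiltonian paths.) Let G = (V, E) be a graph with |V| ≥ 3 and let u and v be distinct non-adjacent vertices of G such that deg_G(u) + deg_G(v) ≥ |V|. Then G has a Hamiltonian path if and only if the graph (V, E ∪ {{u, v}}) obtained by adding the edge {u, v} has a Hamiltonian path. -/

import Mathlib

open List

/-- A graph has a Hamiltonian path if it has a walk visiting every vertex exactly once. -/
def HasHamiltonianPath {V : Type} [DecidableEq V] (G : SimpleGraph V) : Prop :=
  ∃ (a b : V) (p : G.Walk a b), p.IsHamiltonian

namespace BCAux

variable {V : Type} [DecidableEq V]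

lemma exists_walk_of_chain (G : SimpleGraph V) (a : V) :
    ∀ (t : List V), (a :: t).Chain' G.Adj → ∃ b, ∃ p : G.Walk a b, p.support = a :: t := by
  intro t
  induction t generalizing a with
  | nil => exact fun _ => ⟨a, .nil, rfl⟩
  | cons b t ih =>
    intro hc
    obtain ⟨hab, hc'⟩ := List.isChain_cons_cons.1 hc
    obtain ⟨c, p, hp⟩ := ih b hc'
    exact ⟨c, .cons hab p, by simp [hp]⟩

lemma ham_iff_list [Nonempty V] (G : SimpleGraph V) :
    HasHamiltonianPath G ↔ ∃ l : List V, l.Nodup ∧ (∀ x, x ∈ l) ∧ l.Chain' G.Adj := by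
  constructor
  · rintro ⟨a, b, p, hp⟩
    exact ⟨p.support, hp.isPath.support_nodup, fun x => hp.mem_support x,
      p.isChain_adj_support⟩
  · rintro ⟨l, hnd, hmem, hc⟩
    obtain ⟨x⟩ := ‹Nonempty V›
    obtain ⟨a, t, rfl⟩ : ∃ a t, l = a :: t := by
      cases l with
      | nil => exact absurd (hmem x) (by simp)
      | cons a t => exact ⟨a, t, rfl⟩
    obtain ⟨b, p, hp⟩ := exists_walk_of_chain G a t hc
    exact ⟨a, b, p, fun y => by rw [hp]; exact List.count_eq_one_of_mem hnd (hmem y)⟩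

lemma chain'_rotate {α : Type*} {R : α → α → Prop} {l1 l2 : List α}
    (h : (l1 ++ l2).Chain' R)
    (hcyc : ∀ a ∈ (l1 ++ l2).getLast?, ∀ b ∈ (l1 ++ l2).head?, R a b) :
    (l2 ++ l1).Chain' R := by
  rcases List.isChain_append.1 h with ⟨h1, h2, _⟩
  refine List.isChain_append.2 ⟨h2, h1, ?_⟩
  rcases eq_or_ne l1 [] with rfl | hl1
  · simp
  rcases eq_or_ne l2 [] with rfl | hl2
  · simp
  intro a ha b hb
  refine hcyc a ?_ b ?_
  · rwa [List.getLast?_append_of_ne_nil _ hl2]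
  · rwa [List.head?_append_of_ne_nil _ hl1]

lemma chain'_imp_mem {α : Type*} {R S : α → α → Prop} :
    ∀ {l : List α}, l.Chain' R → (∀ a ∈ l, ∀ b ∈ l, R a b → S a b) → l.Chain' S
  | [], _, _ => List.isChain_nil
  | [_], _, _ => List.isChain_singleton _
  | a :: b :: t, hc, himp => by
    obtain ⟨hab, hc'⟩ := List.isChain_cons_cons.1 hc
    refine List.isChain_cons_cons.2 ⟨himp a (by simp) b (by simp) hab, ?_⟩
    exact chain'_imp_mem hc' (fun x hx y hy h => himp x (by simp [hx]) y (by simp [hy]) h)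

lemma exists_bad_pair {α : Type*} {R S : α → α → Prop} :
    ∀ {l : List α}, l.Chain' R → ¬ l.Chain' S →
      ∃ X a b Y, l = X ++ a :: b :: Y ∧ R a b ∧ ¬ S a b
  | [], _, hn => absurd List.isChain_nil hn
  | [a], _, hn => absurd (List.isChain_singleton a) hn
  | a :: b :: t, hc, hn => by
    obtain ⟨hab, hc'⟩ := List.isChain_cons_cons.1 hc
    by_cases hS : S a b
    · have hn' : ¬ (b :: t).Chain' S := fun h => hn (List.isChain_cons_cons.2 ⟨hS, h⟩)
      obtain ⟨X, x, y, Y, hl, hR, hnS⟩ := exists_bad_pair hc' hn'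
      exact ⟨a :: X, x, y, Y, by simp [hl], hR, hnS⟩
    · exact ⟨[], a, b, t, rfl, hab, hS⟩

/-- adjacency on `Option V` where `none` is a phantom vertex adjacent to everything. -/
def OR (G : SimpleGraph V) (a b : Option V) : Prop := ∀ x ∈ a, ∀ y ∈ b, G.Adj x y

instance (G : SimpleGraph V) [DecidableRel G.Adj] : DecidableRel (OR G) := fun a b => by
  unfold OR
  cases a <;> cases b <;> simp <;> infer_instance

@[simp] lemma OR_some_some {G : SimpleGraph V} {x y : V} :
    OR G (some x) (some y) ↔ G.Adj x y := by simp [OR]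

@[simp] lemma OR_none_left {G : SimpleGraph V} {b : Option V} : OR G none b := by simp [OR]

@[simp] lemma OR_none_right {G : SimpleGraph V} {a : Option V} : OR G a none := by simp [OR]

lemma OR.symm {G : SimpleGraph V} {a b : Option V} (h : OR G a b) : OR G b a :=
  fun x hx y hy => (h y hy x hx).symm

lemma eq_map_some : ∀ {E : List (Option V)}, (∀ x ∈ E, x ≠ none) →
    ∃ l' : List V, E = l'.map some
  | [], _ => ⟨[], rfl⟩
  | none :: _, h => absurd rfl (h none (by simp))
  | some a :: t, h => by
    obtain ⟨t', ht⟩ := eq_map_some (E := t) (fun x hx => h x (List.mem_cons_of_mem _ hx))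
    exact ⟨a :: t', by simp [ht]⟩

variable [Fintype V]

lemma core (G : SimpleGraph V) [DecidableRel G.Adj]
    (u v : V) (X Y : List V)
    (hdeg : Fintype.card V ≤ G.degree u + G.degree v)
    (hnd : (X ++ u :: v :: Y).Nodup) (hcomp : ∀ x, x ∈ X ++ u :: v :: Y)
    (hc1 : (X ++ [u]).Chain' G.Adj) (hc2 : (v :: Y).Chain' G.Adj) :
    ∃ l' : List V, l'.Nodup ∧ (∀ x, x ∈ l') ∧ l'.Chain' G.Adj := by
  classical
  set n := Fintype.card V with hn
  set l : List V := X ++ u :: v :: Y with hldef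
  have hlen : l.length = n := by
    have h1 : l.toFinset = Finset.univ := Finset.eq_univ_iff_forall.2 (by simpa using hcomp)
    rw [← List.toFinset_card_of_nodup hnd, h1, hn]
    rfl
  set Q : List (Option V) := (v :: Y).map some ++ none :: (X ++ [u]).map some with hQdef
  have hQlen : Q.length = n + 1 := by
    simp only [hldef, List.length_append, List.length_cons] at hlen
    simp only [hQdef, List.length_append, List.length_cons, List.length_map,
      List.length_append, List.length_cons]
    simp at hlen ⊢
    omega
  have hQperm : Q ~ none :: l.map some := by
    refine List.perm_middle.trans (List.Perm.cons _ ?_)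
    rw [← List.map_append]
    refine List.Perm.map some ?_
    refine List.perm_append_comm.trans ?_
    simp [hldef]
  have hQnd : Q.Nodup := by
    refine hQperm.nodup_iff.2 ?_
    simp only [List.nodup_cons]
    exact ⟨by simp, hnd.map (Option.some_injective V)⟩
  have hQmemV : ∀ x : V, some x ∈ Q := fun x => by
    rw [hQperm.mem_iff]
    simp [hcomp x]
  have hQhead : Q.head? = some (some v) := by simp [hQdef]
  have hQlastmem : Q.getLast? = some (some u) := by
    have hQ' : Q = ((v :: Y).map some ++ none :: X.map some) ++ [some u] := by
      simp [hQdef]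
    rw [hQ', List.getLast?_concat]
  have hQget0 : Q.getD 0 none = some v := by
    have h0 : (0 : ℕ) < Q.length := by omega
    rw [List.getD_eq_getElem _ _ h0]
    have := hQhead
    rwa [List.head?_eq_getElem?, List.getElem?_eq_getElem h0, Option.some_inj] at this
  have hQgetn : Q.getD n none = some u := by
    have h0 : n < Q.length := by omega
    rw [List.getD_eq_getElem _ _ h0]
    have := hQlastmem
    rw [List.getLast?_eq_getElem?, hQlen] at this
    simp only [Nat.add_sub_cancel] at this
    rwa [List.getElem?_eq_getElem h0, Option.some_inj] at this
  -- the cyclic chain on Q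
  have hQchain : Q.Chain' (OR G) := by
    rw [hQdef]
    refine List.isChain_append.2 ⟨?_, ?_, ?_⟩
    · exact List.isChain_map_of_isChain some (fun a b h => OR_some_some.2 h) hc2
    · refine List.isChain_cons.2 ⟨fun y _ => OR_none_left, ?_⟩
      exact List.isChain_map_of_isChain some (fun a b h => OR_some_some.2 h) hc1
    · intro a _ b hb
      simp only [List.head?_cons, Option.mem_def, Option.some_inj] at hb
      subst hb
      exact OR_none_right
  -- counting
  set S : Finset ℕ := (Finset.range n).filter (fun j => OR G (some u) (Q.getD j none)) with hS
  set T : Finset ℕ := (Finset.range n).filter (fun j => OR G (some v) (Q.getD (j+1) none)) with hT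
  have hidx : ∀ x : Option V, x ∈ Q → ∃ i : ℕ, i ≤ n ∧ Q.getD i none = x := by
    intro x hx
    obtain ⟨⟨i, hi⟩, hget⟩ := List.mem_iff_get.1 hx
    refine ⟨i, by omega, ?_⟩
    rw [List.getD_eq_getElem _ _ hi]
    exact hget
  have hWmemQ : ∀ (w : V) (x : Option V),
      x ∈ (insert none ((G.neighborFinset w).image some) : Finset (Option V)) → x ∈ Q := by
    intro w x hx
    rcases Finset.mem_insert.1 hx with rfl | hx'
    · rw [hQperm.mem_iff]; simp
    · obtain ⟨y, _, rfl⟩ := Finset.mem_image.1 hx'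
      exact hQmemV y
  have hWcard : ∀ w : V,
      (insert none ((G.neighborFinset w).image some) : Finset (Option V)).card
        = G.degree w + 1 := by
    intro w
    rw [Finset.card_insert_of_notMem (by simp),
      Finset.card_image_of_injective _ (Option.some_injective V)]
    rfl
  have hScard : G.degree u + 1 ≤ S.card := by
    rw [← hWcard u]
    refine Finset.card_le_card_of_surjOn (fun j => Q.getD j none) ?_
    intro x hx
    simp only [Finset.coe_insert, Set.mem_insert_iff, Finset.coe_image] at hx
    have hxW : x ∈ (insert none ((G.neighborFinset u).image some) : Finset (Option V)) := by
      simpa using hx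
    obtain ⟨i, hile, hgd⟩ := hidx x (hWmemQ u x hxW)
    have hine : i ≠ n := by
      intro he
      rw [he, hQgetn] at hgd
      rcases Finset.mem_insert.1 hxW with rfl | hx'
      · exact (Option.some_ne_none _ hgd).elim
      · obtain ⟨y, hy, rfl⟩ := Finset.mem_image.1 hx'
        rw [Option.some_inj] at hgd
        subst hgd
        simpa using hy
    refine ⟨i, ?_, hgd⟩
    simp only [hS, Finset.coe_filter, Set.mem_setOf_eq, Finset.mem_range]
    refine ⟨by omega, ?_⟩
    rw [hgd]
    rcases Finset.mem_insert.1 hxW with rfl | hx'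
    · exact OR_none_right
    · obtain ⟨y, hy, rfl⟩ := Finset.mem_image.1 hx'
      exact OR_some_some.2 ((by simpa using hy))
  have hTcard : G.degree v + 1 ≤ T.card := by
    rw [← hWcard v]
    refine Finset.card_le_card_of_surjOn (fun j => Q.getD (j + 1) none) ?_
    intro x hx
    have hxW : x ∈ (insert none ((G.neighborFinset v).image some) : Finset (Option V)) := by
      simpa using hx
    obtain ⟨i, hile, hgd⟩ := hidx x (hWmemQ v x hxW)
    have hine : i ≠ 0 := by
      intro he
      rw [he, hQget0] at hgd
      rcases Finset.mem_insert.1 hxW with rfl | hx'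
      · exact (Option.some_ne_none _ hgd).elim
      · obtain ⟨y, hy, rfl⟩ := Finset.mem_image.1 hx'
        rw [Option.some_inj] at hgd
        subst hgd
        simpa using hy
    refine ⟨i - 1, ?_, ?_⟩
    · simp only [hT, Finset.coe_filter, Set.mem_setOf_eq, Finset.mem_range]
      have h1 : i - 1 + 1 = i := by omega
      refine ⟨by omega, ?_⟩
      rw [h1, hgd]
      rcases Finset.mem_insert.1 hxW with rfl | hx'
      · exact OR_none_right
      · obtain ⟨y, hy, rfl⟩ := Finset.mem_image.1 hx'
        exact OR_some_some.2 ((by simpa using hy))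
    · show Q.getD (i - 1 + 1) none = x
      rw [show i - 1 + 1 = i by omega]
      exact hgd
  -- find crossing index
  obtain ⟨j, hjST⟩ : (S ∩ T).Nonempty := by
    rw [← Finset.card_pos]
    have hsub : S ∪ T ⊆ Finset.range n := by
      rw [hS, hT]
      exact Finset.union_subset (Finset.filter_subset _ _) (Finset.filter_subset _ _)
    have h1 := Finset.card_union_add_card_inter S T
    have h2 : (S ∪ T).card ≤ n := le_trans (Finset.card_le_card hsub) (by simp)
    omega
  obtain ⟨hjS, hjT⟩ := Finset.mem_inter.1 hjST
  rw [hS, Finset.mem_filter, Finset.mem_range] at hjS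
  rw [hT, Finset.mem_filter, Finset.mem_range] at hjT
  obtain ⟨hjn, hcr1⟩ := hjS
  have hcr2 := hjT.2
  -- surgery
  set C : List (Option V) := Q.take (j+1) ++ (Q.drop (j+1)).reverse with hC
  have htake_ne : Q.take (j+1) ≠ [] := by
    intro h
    have := congrArg List.length h
    rw [List.length_take, List.length_nil] at this
    omega
  have hdrop_ne : Q.drop (j+1) ≠ [] := by
    intro h
    have := congrArg List.length h
    rw [List.length_drop, List.length_nil] at this
    omega
  have hCperm : C ~ Q := by
    rw [hC]
    calc Q.take (j+1) ++ (Q.drop (j+1)).reverse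
        ~ Q.take (j+1) ++ Q.drop (j+1) := List.Perm.append_left _ (List.reverse_perm _)
      _ = Q := List.take_append_drop _ _
  have hgetj : (Q.take (j+1)).getLast? = some (Q.getD j none) := by
    have hjQ : j < Q.length := by omega
    rw [List.getLast?_eq_getElem?, List.length_take, List.getElem?_take]
    have hmin : min (j+1) Q.length - 1 = j := by omega
    rw [hmin, if_pos (Nat.lt_succ_self j), List.getElem?_eq_getElem hjQ,
      List.getD_eq_getElem _ _ hjQ]
  have hgetlastC : ((Q.drop (j+1)).reverse).head? = some (some u) := by
    rw [List.head?_reverse, List.getLast?_eq_getElem?, List.length_drop, List.getElem?_drop]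
    have harith : j + 1 + (Q.length - (j+1) - 1) = n := by omega
    rw [harith]
    have hnQ : n < Q.length := by omega
    rw [List.getElem?_eq_getElem hnQ, ← List.getD_eq_getElem (d := none) _ hnQ, hQgetn]
  have hCchain : C.Chain' (OR G) := by
    rw [hC]
    refine List.isChain_append.2 ⟨hQchain.take _, ?_, ?_⟩
    · rw [List.isChain_reverse]
      exact (hQchain.drop _).imp (fun a b h => h.symm)
    · intro a ha b hb
      rw [hgetj, Option.mem_def, Option.some_inj] at ha
      rw [hgetlastC, Option.mem_def, Option.some_inj] at hb
      subst ha; subst hb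
      exact hcr1.symm
  have hChead : C.head? = some (some v) := by
    have h0 : 0 < (Q.take (j+1)).length := by
      rw [List.length_take]
      omega
    rw [hC, List.head?_eq_getElem?, List.getElem?_append, if_pos h0, List.getElem?_take,
      if_pos (by omega : (0:ℕ) < j+1)]
    have h0Q : (0:ℕ) < Q.length := by omega
    rw [List.getElem?_eq_getElem h0Q, ← List.getD_eq_getElem (d := none) _ h0Q, hQget0]
  have hClast : C.getLast? = some (Q.getD (j+1) none) := by
    rw [hC, List.getLast?_append_of_ne_nil _ (by simpa using hdrop_ne), List.getLast?_reverse]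
    have hj1 : j + 1 < Q.length := by omega
    rw [List.head?_eq_getElem?, List.getElem?_drop, Nat.add_zero,
      List.getElem?_eq_getElem hj1, List.getD_eq_getElem _ _ hj1]
  have hCcyc : ∀ a ∈ C.getLast?, ∀ b ∈ C.head?, OR G a b := by
    intro a ha b hb
    rw [hClast, Option.mem_def, Option.some_inj] at ha
    rw [hChead, Option.mem_def, Option.some_inj] at hb
    subst ha; subst hb
    exact hcr2.symm
  -- rotate the cyclic chain so that `none` comes first
  have hnoneC : none ∈ C := hCperm.mem_iff.2 (by rw [hQperm.mem_iff]; simp)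
  obtain ⟨C1, C2, hC12⟩ := List.append_of_mem hnoneC
  set D : List (Option V) := (none :: C2) ++ C1 with hD
  have hDchain : D.Chain' (OR G) := by
    rw [hD]
    refine chain'_rotate ?_ ?_
    · rw [← hC12]; exact hCchain
    · rw [← hC12]; exact hCcyc
  have hDperm : D ~ Q := by
    refine List.Perm.trans ?_ hCperm
    rw [hD, hC12]
    calc (none :: C2) ++ C1 ~ C1 ++ (none :: C2) := List.perm_append_comm
      _ = C1 ++ none :: C2 := rfl
  have hDnd : D.Nodup := hDperm.nodup_iff.2 hQnd
  have hDeq : D = none :: (C2 ++ C1) := by rw [hD]; rfl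
  have hnone_notmem : none ∉ C2 ++ C1 := by
    rw [hDeq] at hDnd
    exact (List.nodup_cons.1 hDnd).1
  obtain ⟨l', hl'⟩ : ∃ l' : List V, C2 ++ C1 = l'.map some := by
    refine eq_map_some ?_
    intro x hx
    rintro rfl
    exact hnone_notmem hx
  refine ⟨l', ?_, ?_, ?_⟩
  · have : (C2 ++ C1).Nodup := by
      rw [hDeq] at hDnd
      exact (List.nodup_cons.1 hDnd).2
    rw [hl'] at this
    exact this.of_map _
  · intro x
    have hxD : some x ∈ D := hDperm.mem_iff.2 (hQmemV x)
    rw [hDeq, List.mem_cons] at hxD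
    rcases hxD with h | h
    · exact (Option.some_ne_none _ h).elim
    · rw [hl', List.mem_map] at h
      obtain ⟨y, hy, hyx⟩ := h
      rw [Option.some_inj] at hyx
      rwa [← hyx]
  · have h1 : (C2 ++ C1).Chain' (OR G) := by
      rw [hDeq] at hDchain
      exact hDchain.tail
    rw [hl'] at h1
    exact ((List.isChain_map some).1 h1).imp (fun a b h => OR_some_some.1 h)

end BCAux

/-- Bondy–Chvátal closure theorem for Hamiltonian paths: Let `G = (V, E)` be
a graph with `|V| ≥ 3` and let `u` and `v` be distinct non-adjacent vertices of `G` with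
`deg_G(u) + deg_G(v) ≥ |V|`.  Then `G` has a Hamiltonian path if and only if the graph
`(V, E ∪ {{u, v}})` obtained by adding the edge `{u, v}` has a Hamiltonian path. -/
theorem stmt7 {V : Type} [Fintype V] [DecidableEq V] (G : SimpleGraph V)
    [DecidableRel G.Adj] (h3 : 3 ≤ Fintype.card V)
    (u v : V) (huv : u ≠ v) (hadj : ¬ G.Adj u v)
    (hdeg : Fintype.card V ≤ G.degree u + G.degree v) :
    HasHamiltonianPath G ↔
      HasHamiltonianPath (G ⊔ SimpleGraph.fromEdgeSet {s(u, v)}) := by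
  classical
  have hne : Nonempty V := Fintype.card_pos_iff.1 (by omega)
  rw [BCAux.ham_iff_list, BCAux.ham_iff_list]
  constructor
  · rintro ⟨l, h1, h2, h3'⟩
    exact ⟨l, h1, h2, h3'.imp (fun {a b} h => (SimpleGraph.sup_adj _ _ _ _).2 (Or.inl h))⟩
  · rintro ⟨l, hnd, hmem, hch⟩
    by_cases hG : l.Chain' G.Adj
    · exact ⟨l, hnd, hmem, hG⟩
    obtain ⟨X, a, b, Y, rfl, hab, hnab⟩ := BCAux.exists_bad_pair hch hG
    have hab' : (a = u ∧ b = v) ∨ (a = v ∧ b = u) := by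
      rcases (SimpleGraph.sup_adj _ _ _ _).1 hab with h | h
      · exact absurd h hnab
      · rw [SimpleGraph.fromEdgeSet_adj] at h
        obtain ⟨hs, _⟩ := h
        rw [Set.mem_singleton_iff, Sym2.eq_iff] at hs
        exact hs
    have key : ∀ (u' v' : V), s(u, v) = s(u', v') →
        Fintype.card V ≤ G.degree u' + G.degree v' →
        (X ++ u' :: v' :: Y).Nodup → (∀ x, x ∈ X ++ u' :: v' :: Y) →
        (X ++ u' :: v' :: Y).Chain' (G ⊔ SimpleGraph.fromEdgeSet {s(u, v)}).Adj →
        ∃ l' : List V, l'.Nodup ∧ (∀ x, x ∈ l') ∧ l'.Chain' G.Adj := by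
      intro u' v' hsym hdeg' hnd' hmem' hch'
      rw [show ({s(u,v)} : Set (Sym2 V)) = {s(u',v')} from by rw [hsym]] at hch'
      have hfacts : u' ∉ X ∧ v' ∉ X ∧ u' ≠ v' ∧ v' ∉ Y ∧ u' ∉ Y := by
        have := hnd'
        simp only [List.nodup_append, List.nodup_cons, List.mem_cons, List.disjoint_cons_right,
          not_or] at this
        exact ⟨fun h => this.2.2 u' h u' (Or.inl rfl) rfl, fun h => this.2.2 v' h v' (Or.inr (Or.inl rfl)) rfl,
          this.2.1.1.1, this.2.1.2.1, this.2.1.1.2⟩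
      obtain ⟨hu'X, hv'X, hu'v', hv'Y, hu'Y⟩ := hfacts
      have hsplit : X ++ u' :: v' :: Y = (X ++ [u']) ++ (v' :: Y) := by simp
      rw [hsplit] at hch'
      obtain ⟨hcA, hcB, _⟩ := List.isChain_append.1 hch'
      have hpair : ∀ x y : V, (G ⊔ SimpleGraph.fromEdgeSet {s(u', v')}).Adj x y →
          ¬ G.Adj x y → (x = u' ∧ y = v') ∨ (x = v' ∧ y = u') := by
        intro x y hxy hnxy
        rcases (SimpleGraph.sup_adj _ _ _ _).1 hxy with h | h
        · exact absurd h hnxy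
        · rw [SimpleGraph.fromEdgeSet_adj, Set.mem_singleton_iff, Sym2.eq_iff] at h
          exact h.1
      refine BCAux.core G u' v' X Y hdeg' hnd' hmem' ?_ ?_
      · refine BCAux.chain'_imp_mem hcA ?_
        intro x hx y hy hxy
        by_contra hnxy
        have hv'mem : v' ∈ X ++ [u'] := by
          rcases hpair x y hxy hnxy with ⟨h1, h2⟩ | ⟨h1, h2⟩
          · rw [← h2]; exact hy
          · rw [← h1]; exact hx
        rcases List.mem_append.1 hv'mem with h | h
        · exact hv'X h
        · exact hu'v' (List.mem_singleton.1 h).symm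
      · refine BCAux.chain'_imp_mem hcB ?_
        intro x hx y hy hxy
        by_contra hnxy
        have hu'mem : u' ∈ v' :: Y := by
          rcases hpair x y hxy hnxy with ⟨h1, h2⟩ | ⟨h1, h2⟩
          · rw [← h1]; exact hx
          · rw [← h2]; exact hy
        rcases List.mem_cons.1 hu'mem with h | h
        · exact hu'v' h
        · exact hu'Y h
    rcases hab' with ⟨rfl, rfl⟩ | ⟨rfl, rfl⟩
    · exact key a b rfl hdeg hnd hmem hch
    · exact key a b (Sym2.eq_swap) (by omega) hnd hmem hch
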